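/- arXiv:1610.04043 — 5 statements merged into one kernel-verified Lean document; each statement's English description precedes it below -/
import Mathlib

section
/- The shift dominates every move: if X ≼ Y are admissible configurations and 1 ≤ ξ ≤ ∞, then Φ_ξ(X) ≼ τ(Y), where τ is the shift (τY)(j) = Y(j−1). -/
open scoped Classical

/-- A configuration of the infinite-bin model: number of balls in each bin. -/
abbrev Config := ℤ → ℕ∞

/-- Admissible configuration: nonempty bins form a semi-infinite interval, and
every bin to the left of an infinite bin is infinite. -/
def IsAdmissible (X : Config) : Prop :=
  (∃ m : ℤ, ∀ j : ℤ, X j ≠ 0 ↔ j ≤ m) ∧ ∀ j : ℤ, X j = ⊤ → X (j - 1) = ⊤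

/-- N(X,k): number of balls in bins of index ≥ k. -/
noncomputable def Nballs (X : Config) (k : ℤ) : ℕ∞ := ∑' j : {j : ℤ // k ≤ j}, X j

/-- B(X,ξ): leftmost position such that there are fewer than ξ balls to its right. -/
noncomputable def Bpos (X : Config) (ξ : ℕ) : ℤ := sInf {j : ℤ | Nballs X j < (ξ : ℕ∞)}

/-- The move of type ξ: add one ball in the bin of index B(X,ξ). -/
noncomputable def Phi (ξ : ℕ) (X : Config) : Config :=
  fun j => X j + (if j = Bpos X ξ then 1 else 0)

/-- The move of type ξ ∈ ℕ ∪ {∞}, with Φ_∞ = id. -/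
noncomputable def PhiE (ξ : ℕ∞) (X : Config) : Config :=
  if ξ = ⊤ then X else Phi ξ.toNat X

/-- The shift operator τ. -/
def shift (X : Config) : Config := fun j => X (j - 1)

/-- The partial order on configurations: X ≼ Y iff N(X,j) ≤ N(Y,j) for all j. -/
def ConfLE (X Y : Config) : Prop := ∀ j : ℤ, Nballs X j ≤ Nballs Y j

lemma enat_summable {ι : Type*} (f : ι → ℕ∞) : Summable f :=
  ⟨_, hasSum_of_isLUB _ (isLUB_iSup (f := fun s : Finset ι => ∑ i ∈ s, f i))⟩

noncomputable def iciEquiv (k : ℤ) : ℕ ≃ {i : ℤ // k ≤ i} where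
  toFun n := ⟨k + n, by omega⟩
  invFun i := (i.1 - k).toNat
  left_inv n := by simp
  right_inv i := by
    have := i.2
    ext
    simp only
    omega

lemma nballs_eq (X : Config) (k : ℤ) : Nballs X k = ∑' n : ℕ, X (k + n) :=
  ((iciEquiv k).tsum_eq (fun i : {i : ℤ // k ≤ i} => X i)).symm

lemma nballs_rec (X : Config) (k : ℤ) : Nballs X k = X k + Nballs X (k + 1) := by
  rw [nballs_eq, nballs_eq,
    tsum_eq_zero_add' (enat_summable _)]
  congr 1
  · simp
  · refine tsum_congr fun n => ?_
    congr 1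
    push_cast
    ring

lemma nballs_le_pred (X : Config) (k : ℤ) : Nballs X k ≤ Nballs X (k - 1) := by
  have := nballs_rec X (k - 1)
  rw [show k - 1 + 1 = k by ring] at this
  rw [this]
  exact le_add_self

lemma nballs_vanish {X : Config} {m : ℤ} (hm : ∀ j : ℤ, X j ≠ 0 ↔ j ≤ m) {k : ℤ}
    (hk : m < k) : Nballs X k = 0 := by
  rw [nballs_eq]
  have : ∀ n : ℕ, X (k + n) = 0 := fun n => by
    by_contra h
    have := (hm _).mp h
    omega
  simp [this]

lemma nballs_ge {X : Config} {m : ℤ} (hm : ∀ j : ℤ, X j ≠ 0 ↔ j ≤ m) (n : ℕ) :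
    (n : ℕ∞) ≤ Nballs X (m + 1 - n) := by
  induction n with
  | zero => exact zero_le
  | succ n ih =>
    have h1 : (1 : ℕ∞) ≤ X (m - n) := by
      rw [ENat.one_le_iff_ne_zero, hm]
      omega
    have := nballs_rec X (m - n)
    rw [show (m : ℤ) - n + 1 = m + 1 - n by ring] at this
    rw [show (m : ℤ) + 1 - (n + 1 : ℕ) = m - n by push_cast; ring, this]
    push_cast
    rw [add_comm (n : ℕ∞) 1]
    exact add_le_add h1 ih

/-- The shift dominates every move: if X ≼ Y and 1 ≤ ξ ≤ ∞ then Φ_ξ(X) ≼ τ(Y). -/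
theorem phiE_le_shift (X Y : Config) (hX : IsAdmissible X) (hY : IsAdmissible Y)
    (hXY : ConfLE X Y) (ξ : ℕ∞) (hξ : 1 ≤ ξ) :
    ConfLE (PhiE ξ X) (shift Y) := by
  intro j
  have hshift : Nballs (shift Y) j = Nballs Y (j - 1) := by
    rw [nballs_eq, nballs_eq]
    refine tsum_congr fun n => ?_
    show Y (j + n - 1) = Y (j - 1 + n)
    congr 1
    ring
  rw [hshift]
  have hYstep : Nballs X j ≤ Nballs Y (j - 1) :=
    (hXY j).trans (nballs_le_pred Y j)
  rcases eq_or_ne ξ ⊤ with rfl | hfin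
  · simpa [PhiE] using hYstep
  · obtain ⟨q, rfl⟩ : ∃ q : ℕ, ξ = (q : ℕ∞) := ⟨ξ.toNat, (ENat.coe_toNat hfin).symm⟩
    have hq1 : 1 ≤ q := by exact_mod_cast hξ
    have hPhiE : PhiE (q : ℕ∞) X = Phi q X := by
      simp [PhiE, hfin]
    rw [hPhiE]
    obtain ⟨m, hm⟩ := hX.1
    have hSne : ({i : ℤ | Nballs X i < (q : ℕ∞)}).Nonempty := by
      refine ⟨m + 1, ?_⟩
      show Nballs X (m + 1) < (q : ℕ∞)
      rw [nballs_vanish hm (by omega)]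
      exact_mod_cast Nat.pos_of_ne_zero (by omega)
    have hSbdd : BddBelow {i : ℤ | Nballs X i < (q : ℕ∞)} := by
      refine ⟨m + 1 - q, fun i hi => ?_⟩
      by_contra h
      push_neg at h
      set n : ℕ := (m + 1 - i).toNat with hn
      have hni : m + 1 - (n : ℤ) = i := by omega
      have hge : (q : ℕ∞) ≤ Nballs X i := by
        calc (q : ℕ∞) ≤ (n : ℕ∞) := by exact_mod_cast (by omega : q ≤ n)
        _ ≤ Nballs X (m + 1 - n) := nballs_ge hm n
        _ = Nballs X i := by rw [hni]
      exact absurd hi hge.not_gt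
    have hBmem : Nballs X (Bpos X q) < (q : ℕ∞) := Int.csInf_mem hSne hSbdd
    have hBle : ∀ i : ℤ, Nballs X i < (q : ℕ∞) → Bpos X q ≤ i := fun i hi =>
      csInf_le hSbdd hi
    rcases le_or_gt j (Bpos X q) with hjB | hBj
    · -- j ≤ B
      have hj1 : (q : ℕ∞) ≤ Nballs X (j - 1) := by
        by_contra h
        push_neg at h
        have := hBle (j - 1) h
        omega
      have hXj : X (j - 1) ≠ 0 := by
        intro h0
        have hmj : m < j - 1 := by
          by_contra h
          exact ((hm _).mpr (by omega)) h0
        rw [nballs_vanish hm hmj] at hj1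
        have h0q : (0 : ℕ∞) < (q : ℕ∞) := by exact_mod_cast Nat.pos_of_ne_zero (by omega)
        exact absurd hj1 h0q.not_ge
      have hone : (1 : ℕ∞) ≤ X (j - 1) := ENat.one_le_iff_ne_zero.mpr hXj
      have hsum : Nballs (Phi q X) j ≤ Nballs X j + 1 := by
        rw [nballs_eq, nballs_eq]
        have hcg : ∀ n : ℕ, Phi q X (j + n)
            = X (j + n) + (if n = (Bpos X q - j).toNat then 1 else 0) := by
          intro n
          unfold Phi
          congr 1
          by_cases h : (n : ℤ) = Bpos X q - j
          · rw [if_pos (by omega), if_pos (by omega)]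
          · rw [if_neg (by omega), if_neg (by omega)]
        rw [tsum_congr hcg, Summable.tsum_add (enat_summable _) (enat_summable _), tsum_ite_eq]
      calc Nballs (Phi q X) j ≤ Nballs X j + 1 := hsum
        _ ≤ Nballs X j + X (j - 1) := add_le_add_right hone _
        _ = X (j - 1) + Nballs X j := add_comm _ _
        _ = Nballs X (j - 1) := by
            rw [nballs_rec X (j - 1), show j - 1 + 1 = j by ring]
        _ ≤ Nballs Y (j - 1) := hXY (j - 1)
    · -- B < j
      have heq : Nballs (Phi q X) j = Nballs X j := by
        rw [nballs_eq, nballs_eq]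
        refine tsum_congr fun n => ?_
        unfold Phi
        rw [if_neg (by omega), add_zero]
      rw [heq]
      exact hYstep
end

section
/- Equivalence of two characterizations of the partial order on configurations: for admissible configurations X, Y, one has N(X,j) ≤ N(Y,j) for all j ∈ ℤ if and only if B(X,ξ) ≤ B(Y,ξ) for all ξ ∈ ℕ. -/
open scoped Classical

lemma nballs_antitone (X : Config) : Antitone (Nballs X) := by
  intro k l hkl
  refine Summable.tsum_le_tsum_of_inj (fun j => ⟨j.1, hkl.trans j.2⟩) ?_ (fun c _ => zero_le)
    (fun b => le_rfl) (enat_summable _) (enat_summable _)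
  intro a b hab
  simpa [Subtype.ext_iff] using hab

lemma nballs_succ_top (X : Config) (m : ℤ) (hm : ∀ j : ℤ, X j ≠ 0 ↔ j ≤ m) :
    Nballs X (m + 1) = 0 := by
  have : ∀ j : {j : ℤ // m + 1 ≤ j}, X j = 0 := by
    intro j
    by_contra h
    have h1 := (hm j).1 h
    have h2 := j.2
    omega
  simp [Nballs, this]

lemma nballs_lower (X : Config) (m : ℤ) (hm : ∀ j : ℤ, X j ≠ 0 ↔ j ≤ m) (j : ℤ) :
    ((m + 1 - j).toNat : ℕ∞) ≤ Nballs X j := by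
  classical
  set s : Finset {i : ℤ // j ≤ i} := (Finset.Icc j m).subtype (j ≤ ·) with hs
  have hcard : s.card = (m + 1 - j).toNat := by
    rw [hs, Finset.card_subtype, Finset.filter_true_of_mem
      (fun i hi => (Finset.mem_Icc.1 hi).1), Int.card_Icc]
  calc ((m + 1 - j).toNat : ℕ∞) = ∑ _i ∈ s, (1 : ℕ∞) := by
        rw [Finset.sum_const, nsmul_eq_mul, mul_one, hcard]
    _ ≤ ∑ i ∈ s, X i := by
        refine Finset.sum_le_sum fun i hi => ?_
        have him : (i : ℤ) ∈ Finset.Icc j m := Finset.mem_subtype.1 hi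
        exact ENat.one_le_iff_ne_zero.2 ((hm i).2 (Finset.mem_Icc.1 him).2)
    _ ≤ Nballs X j := Summable.sum_le_tsum s (fun _ _ => zero_le) (enat_summable _)

lemma bpos_le_iff (X : Config) (hX : IsAdmissible X) {ξ : ℕ} (hξ : 1 ≤ ξ) (j : ℤ) :
    Bpos X ξ ≤ j ↔ Nballs X j < (ξ : ℕ∞) := by
  obtain ⟨⟨m, hm⟩, -⟩ := hX
  set S : Set ℤ := {j : ℤ | Nballs X j < (ξ : ℕ∞)} with hS
  have hne : (m + 1) ∈ S := by
    simp only [hS, Set.mem_setOf_eq, nballs_succ_top X m hm]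
    exact_mod_cast Nat.pos_of_ne_zero (by omega)
  have hbdd : BddBelow S := by
    refine ⟨m + 2 - ξ, fun k hk => ?_⟩
    by_contra h
    push_neg at h
    have h2 : (ξ : ℤ) ≤ m + 1 - k := by omega
    have h1 : (ξ : ℕ∞) ≤ ((m + 1 - k).toNat : ℕ∞) := by
      exact_mod_cast Nat.cast_le.2 (by omega : ξ ≤ (m + 1 - k).toNat)
    exact absurd hk (not_lt.2 (h1.trans (nballs_lower X m hm k)))
  constructor
  · intro h
    have hmem : Bpos X ξ ∈ S := Int.csInf_mem ⟨_, hne⟩ hbdd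
    exact lt_of_le_of_lt (nballs_antitone X h) hmem
  · intro h
    exact csInf_le hbdd h

/-- The two characterizations of the partial order on configurations agree. -/
theorem confLE_iff_bpos (X Y : Config) (hX : IsAdmissible X) (hY : IsAdmissible Y) :
    (∀ j : ℤ, Nballs X j ≤ Nballs Y j) ↔ ∀ ξ : ℕ, 1 ≤ ξ → Bpos X ξ ≤ Bpos Y ξ := by
  constructor
  · intro h ξ hξ
    rw [bpos_le_iff X hX hξ]
    exact lt_of_le_of_lt (h _) ((bpos_le_iff Y hY hξ _).1 le_rfl)
  · intro h j
    by_contra hc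
    push_neg at hc
    have hne : Nballs Y j ≠ ⊤ := (hc.trans_le le_top).ne
    set k : ℕ := (Nballs Y j).toNat with hk
    have hky : (k : ℕ∞) = Nballs Y j := ENat.coe_toNat hne
    have hY1 : Nballs Y j < ((k + 1 : ℕ) : ℕ∞) := by
      rw [← hky]; exact_mod_cast Nat.lt_succ_self k
    have hB : Bpos X (k + 1) ≤ j :=
      le_trans (h (k + 1) (by omega)) ((bpos_le_iff Y hY (by omega) j).2 hY1)
    have hX1 : Nballs X j < ((k + 1 : ℕ) : ℕ∞) := (bpos_le_iff X hX (by omega) j).1 hB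
    have : Nballs X j ≤ (k : ℕ∞) := by
      have : Nballs X j < (k : ℕ∞) + 1 := by exact_mod_cast hX1
      exact (ENat.lt_add_one_iff (by simp)).1 this
    exact absurd (this.trans_lt (hky.symm ▸ hc)) (lt_irrefl _)
end

section
/- For any admissible configuration X and word α = (α_1,…,α_n), the total displacement of the front decomposes as d_X(α) = Σ_{k=1}^{n} Σ_{j=1}^{n−k+1} ε_X((α_k, α_{k+1}, …, α_{k+j−1})), i.e. d_X(α) is the sum of ε_X(β) over all consecutive subwords β of α counted with multiplicity. -/
open scoped Classical

/-- Configuration obtained after applying successively the moves listed in α. -/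
noncomputable def applyWord (X : Config) (α : List ℕ) : Config :=
  α.foldl (fun Y a => Phi a Y) X

/-- d_X(α): displacement of the front after performing the word α. -/
noncomputable def dX (X : Config) (α : List ℕ) : ℤ :=
  Bpos (applyWord X α) 1 - Bpos X 1

/-- α ∈ P_X : α is nonempty and its last move places a ball in a previously empty bin. -/
def inP (X : Config) (α : List ℕ) : Prop :=
  ∃ β a, α = β ++ [a] ∧ applyWord X β (Bpos (applyWord X β) a) = 0

/-- ε_X(α) = 1_{α ∈ P_X} - 1_{ϖα ∈ P_X}. -/
noncomputable def eps (X : Config) (α : List ℕ) : ℤ :=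
  (if inP X α then 1 else 0) - (if inP X α.tail then 1 else 0)

lemma enat_hasSum {ι : Type*} (f : ι → ℕ∞) :
    HasSum f (⨆ s : Finset ι, ∑ i ∈ s, f i) :=
  tendsto_atTop_iSup fun _ _ h => Finset.sum_le_sum_of_subset h

lemma Nballs_eq_zero {X : Config} {k : ℤ} (h : ∀ j, k ≤ j → X j = 0) : Nballs X k = 0 := by
  have : ∀ j : {j : ℤ // k ≤ j}, X j = (0 : ℕ∞) := fun j => h j j.2
  rw [Nballs, tsum_congr this, tsum_zero]

lemma le_Nballs {X : Config} {m : ℤ} (h1 : ∀ j : ℤ, X j ≠ 0 ↔ j ≤ m) {k : ℤ} {a : ℕ}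
    (hk : k + a ≤ m + 1) : (a : ℕ∞) ≤ Nballs X k := by
  have he : Nballs X k = ∑' x : ℤ, Set.indicator {j : ℤ | k ≤ j} X x :=
    tsum_subtype {j : ℤ | k ≤ j} X
  rw [he]
  refine le_trans ?_ (Summable.sum_le_tsum (Finset.Icc k (k + a - 1))
      (fun i _ => zero_le) (enat_summable _))
  have hcard : (Finset.Icc k (k + a - 1)).card = a := by
    rw [Int.card_Icc]; omega
  calc (a : ℕ∞) = (Finset.Icc k (k + a - 1)).card • (1 : ℕ∞) := by rw [hcard]; simp
    _ ≤ ∑ i ∈ Finset.Icc k (k + a - 1), Set.indicator {j : ℤ | k ≤ j} X i := by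
        apply Finset.card_nsmul_le_sum
        intro x hx
        rw [Finset.mem_Icc] at hx
        rw [Set.indicator_of_mem (show x ∈ {j : ℤ | k ≤ j} from hx.1)]
        exact ENat.one_le_iff_ne_zero.2 ((h1 x).2 (by omega))

lemma Bpos_one {X : Config} {m : ℤ} (h1 : ∀ j : ℤ, X j ≠ 0 ↔ j ≤ m) : Bpos X 1 = m + 1 := by
  have hset : {j : ℤ | Nballs X j < ((1 : ℕ) : ℕ∞)} = {j : ℤ | m < j} := by
    ext j
    simp only [Set.mem_setOf_eq, Nat.cast_one]
    constructor
    · intro h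
      by_contra hj
      push_neg at hj
      have h2 := le_Nballs h1 (k := j) (a := 1) (by omega)
      rw [Nat.cast_one] at h2
      exact absurd h2 (not_le.2 h)
    · intro h
      have : Nballs X j = 0 := Nballs_eq_zero fun j' hj' => by
        by_contra hne
        have := (h1 j').1 hne
        omega
      rw [this]
      exact zero_lt_one
  rw [Bpos, hset]
  apply le_antisymm
  · exact csInf_le ⟨m + 1, fun x hx => by exact hx⟩ (by simp)
  · exact le_csInf ⟨m + 1, by simp⟩ fun b hb => hb

lemma Bpos_le {X : Config} {m : ℤ} (h1 : ∀ j : ℤ, X j ≠ 0 ↔ j ≤ m) {a : ℕ} (ha : 1 ≤ a) :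
    Bpos X a ≤ m + 1 := by
  apply csInf_le
  · refine ⟨m + 2 - a, fun j hj => ?_⟩
    simp only [Set.mem_setOf_eq] at hj
    by_contra hlt
    push_neg at hlt
    exact absurd (le_Nballs h1 (by omega)) (not_le.2 hj)
  · show Nballs X (m + 1) < (a : ℕ∞)
    rw [Nballs_eq_zero fun j hj => by by_contra hne; have := (h1 j).1 hne; omega]
    exact lt_of_lt_of_le zero_lt_one (by exact_mod_cast ha)

lemma step {X : Config} (hX : IsAdmissible X) {a : ℕ} (ha : 1 ≤ a) :
    IsAdmissible (Phi a X) ∧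
      Bpos (Phi a X) 1 = Bpos X 1 + (if X (Bpos X a) = 0 then 1 else 0) := by
  obtain ⟨⟨m, h1⟩, h2⟩ := hX
  set B := Bpos X a with hB
  have hBle : B ≤ m + 1 := Bpos_le h1 ha
  have hne : ∀ j : ℤ, Phi a X j ≠ 0 ↔ X j ≠ 0 ∨ j = B := by
    intro j
    simp only [Phi, ne_eq, add_eq_zero, not_and_or]
    constructor
    · rintro (h | h)
      · exact Or.inl h
      · right
        by_contra hj
        simp [hj] at h
        exact hj h
    · rintro (h | rfl)
      · exact Or.inl h
      · right; simp; exact hB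
  have hnew : ∀ j : ℤ, Phi a X j ≠ 0 ↔ j ≤ (if X B = 0 then m + 1 else m) := by
    intro j
    rw [hne j, h1 j]
    split_ifs with hB0
    · have hBm : B = m + 1 := by
        have := h1 B
        have : ¬ B ≤ m := fun h => ((h1 B).2 h) hB0
        omega
      rw [hBm]
      constructor
      · rintro (h | rfl) <;> omega
      · intro h
        rcases lt_or_eq_of_le h with h | h
        · exact Or.inl (by omega)
        · exact Or.inr h
    · have hBm : B ≤ m := (h1 B).1 hB0
      constructor
      · rintro (h | rfl)
        · exact h
        · exact hBm
      · exact Or.inl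
  have htop : ∀ j : ℤ, Phi a X j = ⊤ → Phi a X (j - 1) = ⊤ := by
    intro j hj
    have hXj : X j = ⊤ := by
      simp only [Phi] at hj
      rcases WithTop.add_eq_top.1 hj with h | h
      · exact h
      · exfalso; revert h; split <;> [exact ENat.one_ne_top; exact ENat.zero_ne_top]
    have := h2 j hXj
    simp [Phi, this]
  refine ⟨⟨⟨_, hnew⟩, htop⟩, ?_⟩
  rw [Bpos_one hnew, Bpos_one h1]
  split_ifs <;> ring

lemma applyWord_append (X : Config) (β : List ℕ) (a : ℕ) :
    applyWord X (β ++ [a]) = Phi a (applyWord X β) := by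
  simp [applyWord, List.foldl_append]

lemma isAdmissible_applyWord {X : Config} (hX : IsAdmissible X) {α : List ℕ}
    (hα : ∀ a ∈ α, 1 ≤ a) : IsAdmissible (applyWord X α) := by
  induction α generalizing X with
  | nil => exact hX
  | cons a α ih =>
      have h : applyWord X (a :: α) = applyWord (Phi a X) α := rfl
      rw [h]
      exact ih ((step hX (hα a (by simp))).1) fun b hb => hα b (by simp [hb])

lemma not_inP_nil (X : Config) : ¬ inP X [] := by
  rintro ⟨β, a, h, -⟩
  simp at h

lemma inP_concat (X : Config) (β : List ℕ) (a : ℕ) :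
    inP X (β ++ [a]) ↔ applyWord X β (Bpos (applyWord X β) a) = 0 := by
  constructor
  · rintro ⟨γ, b, h, h0⟩
    obtain ⟨h1, h2⟩ := List.append_inj' h (by simp)
    obtain rfl : β = γ := h1
    obtain rfl : a = b := by simpa using h2
    exact h0
  · intro h0; exact ⟨β, a, rfl, h0⟩

lemma dX_eq_prefix_sum {X : Config} (hX : IsAdmissible X) (α : List ℕ)
    (hα : ∀ a ∈ α, 1 ≤ a) :
    dX X α = ∑ t ∈ Finset.Icc 1 α.length, (if inP X (α.take t) then (1 : ℤ) else 0) := by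
  induction α using List.reverseRecOn with
  | nil => simp [dX, applyWord]
  | append_singleton β a ih =>
      have hβ : ∀ b ∈ β, 1 ≤ b := fun b hb => hα b (by simp [hb])
      have ha : 1 ≤ a := hα a (by simp)
      have hY : IsAdmissible (applyWord X β) := isAdmissible_applyWord hX hβ
      have hstep := (step hY ha).2
      have hlen : (β ++ [a]).length = β.length + 1 := by simp
      rw [hlen, Finset.sum_Icc_succ_top (by omega : 1 ≤ β.length + 1)]
      have htake : ∀ t ∈ Finset.Icc 1 β.length,
          (if inP X ((β ++ [a]).take t) then (1 : ℤ) else 0)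
            = (if inP X (β.take t) then (1 : ℤ) else 0) := by
        intro t ht
        rw [Finset.mem_Icc] at ht
        rw [List.take_append_of_le_length ht.2]
      rw [Finset.sum_congr rfl htake]
      have htake2 : (β ++ [a]).take (β.length + 1) = β ++ [a] := by
        rw [← hlen, List.take_length]
      rw [htake2, ← ih hβ]
      have : dX X (β ++ [a]) = dX X β + (if inP X (β ++ [a]) then 1 else 0) := by
        simp only [dX, applyWord_append, hstep, inP_concat]
        ring
      rw [this]

lemma tail_take_aux (l : List ℕ) (j : ℕ) : (l.take (j + 1)).tail = l.tail.take j := by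
  cases l <;> simp

lemma sum_eps_eq (X : Config) (α : List ℕ) :
    (∑ k ∈ Finset.Icc 1 α.length, ∑ j ∈ Finset.Icc 1 (α.length - k + 1),
        eps X ((α.drop (k - 1)).take j))
      = ∑ t ∈ Finset.Icc 1 α.length, (if inP X (α.take t) then (1 : ℤ) else 0) := by
  obtain ⟨n, hn⟩ : ∃ n, α.length = n := ⟨_, rfl⟩
  rw [hn]
  have h1 : (∑ k ∈ Finset.Icc 1 n, ∑ j ∈ Finset.Icc 1 (n - k + 1),
        eps X ((α.drop (k - 1)).take j))
      = ∑ t ∈ Finset.Icc 1 n, ∑ k ∈ Finset.Icc 1 t,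
          eps X ((α.drop (k - 1)).take (t - k + 1)) := by
    rw [Finset.sum_sigma', Finset.sum_sigma']
    refine Finset.sum_nbij' (fun p => ⟨p.1 + p.2 - 1, p.1⟩) (fun p => ⟨p.2, p.1 - p.2 + 1⟩)
      ?_ ?_ ?_ ?_ ?_
    · rintro ⟨k, j⟩ hp
      simp only [Finset.mem_sigma, Finset.mem_Icc] at hp ⊢
      omega
    · rintro ⟨t, k⟩ hp
      simp only [Finset.mem_sigma, Finset.mem_Icc] at hp ⊢
      omega
    · rintro ⟨k, j⟩ hp
      simp only [Finset.mem_sigma, Finset.mem_Icc] at hp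
      simp only [Sigma.mk.inj_iff, heq_eq_eq]
      exact ⟨trivial, by omega⟩
    · rintro ⟨t, k⟩ hp
      simp only [Finset.mem_sigma, Finset.mem_Icc] at hp
      simp only [Sigma.mk.inj_iff, heq_eq_eq]
      exact ⟨by omega, trivial⟩
    · rintro ⟨k, j⟩ hp
      simp only [Finset.mem_sigma, Finset.mem_Icc] at hp
      have : k + j - 1 - k + 1 = j := by omega
      simp [this]
  rw [h1]
  apply Finset.sum_congr rfl
  intro t ht
  rw [Finset.mem_Icc] at ht
  have key : ∀ k ∈ Finset.Icc 1 t,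
      eps X ((α.drop (k - 1)).take (t - k + 1)) =
        (fun k => if inP X ((α.drop (k - 1)).take (t + 1 - k)) then (1 : ℤ) else 0) k
        - (fun k => if inP X ((α.drop (k - 1)).take (t + 1 - k)) then (1 : ℤ) else 0) (k + 1) := by
    intro k hk
    rw [Finset.mem_Icc] at hk
    have e1 : t - k + 1 = t + 1 - k := by omega
    have e2 : ((α.drop (k - 1)).take (t - k + 1)).tail = (α.drop k).take (t - k) := by
      have h3 : t - k + 1 = (t - k) + 1 := rfl
      rw [h3, tail_take_aux, List.tail_drop]
      have h4 : k - 1 + 1 = k := by omega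
      rw [h4]
    have e3 : k + 1 - 1 = k := by omega
    have e4 : t + 1 - (k + 1) = t - k := by omega
    show eps X ((α.drop (k - 1)).take (t - k + 1)) =
      (if inP X ((α.drop (k - 1)).take (t + 1 - k)) then (1 : ℤ) else 0)
      - (if inP X ((α.drop (k + 1 - 1)).take (t + 1 - (k + 1))) then (1 : ℤ) else 0)
    rw [e3, e4, eps, e2, e1]
  rw [Finset.sum_congr rfl key]
  set f : ℕ → ℤ := fun k => if inP X ((α.drop (k - 1)).take (t + 1 - k)) then (1 : ℤ) else 0
    with hf
  have htel : ∑ k ∈ Finset.Icc 1 t, (f k - f (k + 1)) = f 1 - f (t + 1) := by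
    rw [← Finset.Ico_add_one_right_eq_Icc, Finset.sum_Ico_eq_sum_range]
    have h5 : ∑ i ∈ Finset.range t, (f (1 + i) - f (1 + i + 1))
        = (fun i => f (1 + i)) 0 - (fun i => f (1 + i)) t :=
      Finset.sum_range_sub' (fun i => f (1 + i)) t
    rw [show t + 1 - 1 = t from rfl, h5]
    show f (1 + 0) - f (1 + t) = f 1 - f (t + 1)
    rw [Nat.add_comm 1 t]
  rw [htel]
  have hf1 : f 1 = if inP X (α.take t) then 1 else 0 := by
    show (if inP X ((α.drop (1 - 1)).take (t + 1 - 1)) then (1 : ℤ) else 0) = _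
    norm_num
  have hft : f (t + 1) = 0 := by
    show (if inP X ((α.drop (t + 1 - 1)).take (t + 1 - (t + 1))) then (1 : ℤ) else 0) = 0
    have h6 : t + 1 - (t + 1) = 0 := by omega
    rw [h6]
    simp [not_inP_nil]
  rw [hf1, hft, sub_zero]

/-- The displacement of the front equals the sum of ε_X(β) over all consecutive
subwords β of α, counted with multiplicity. -/
theorem dX_eq_sum_eps (X : Config) (hX : IsAdmissible X) (α : List ℕ)
    (hα : ∀ a ∈ α, 1 ≤ a) :
    dX X α = ∑ k ∈ Finset.Icc 1 α.length, ∑ j ∈ Finset.Icc 1 (α.length - k + 1),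
      eps X ((α.drop (k - 1)).take j) := by
  rw [dX_eq_prefix_sum hX α hα, ← sum_eps_eq]
end

section
/- For any word α = (α_1,…,α_l) of positive integers with l > H(α) + 1 (where H(α) = Σ α_i − l is the height), there exists a position n ≥ 2 at which α has a renovation event, i.e. α_{n+k} ≤ k+1 for all 0 ≤ k ≤ l−n. -/
/-- Any word α of positive integers with L(α) > H(α) + 1 (i.e. Σ α_i + 1 < 2 L(α),
where the height is H(α) = Σ α_i − L(α)) has a renovation event at some position
n ≥ 2, i.e. α_{n+k} ≤ k+1 for all 0 ≤ k ≤ L(α) − n. -/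
theorem renovation_of_length_gt_height (α : List ℕ) (hα : ∀ a ∈ α, 1 ≤ a)
    (h : α.sum + 1 < 2 * α.length) :
    ∃ n : ℕ, 2 ≤ n ∧ n ≤ α.length ∧
      ∀ k : ℕ, k ≤ α.length - n → α.getD (n + k - 1) 0 ≤ k + 1 := by
  classical
  set l := α.length with hl
  set S : ℕ → ℕ := fun t => (α.take t).sum with hS
  set P : ℕ → Prop := fun t => 2 * t ≤ S t + 1 with hP
  -- each element bounds
  have hget : ∀ t, t < l → 1 ≤ α.getD t 0 := by
    intro t ht
    rw [List.getD_eq_getElem α 0 (show t < α.length by omega)]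
    exact hα _ (List.getElem_mem _)
  have hlen_le_sum : l ≤ α.sum := by
    have := List.card_nsmul_le_sum α 1 hα
    simpa using this
  have hl2 : 2 ≤ l := by omega
  -- S step
  have hstep : ∀ t, t < l → S (t + 1) = S t + α.getD t 0 := by
    intro t ht
    rw [List.getD_eq_getElem α 0 (show t < α.length by omega)]
    simp [hS, List.sum_take_succ α t (show t < α.length by omega)]
  have hS1 : P 1 := by
    have h0 : (0:ℕ) < l := by omega
    have h1 := hstep 0 h0
    have h2 := hget 0 h0
    have h00 : S 0 = 0 := by simp [hS]
    simp only [Nat.zero_add] at h1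
    simp only [hP]
    omega
  have hSl : S l = α.sum := by simp [hS, hl]
  have hnotPl : ¬ P l := by
    simp only [hP, hSl]
    omega
  set m := Nat.findGreatest P l with hm
  have hm1 : 1 ≤ m := Nat.le_findGreatest (by omega) hS1
  have hml : m ≤ l := Nat.findGreatest_le l
  have hPm : P m := Nat.findGreatest_spec (m := 1) (by omega) hS1
  have hmlt : m < l := by
    rcases lt_or_eq_of_le hml with h' | h'
    · exact h'
    · exact absurd (h' ▸ hPm) hnotPl
  -- key inequality
  have key : ∀ k, m + 1 + k ≤ l → S m + k + α.getD (m + k) 0 ≤ S (m + 1 + k) := by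
    intro k
    induction k with
    | zero =>
      intro hk
      have h1 := hstep m (by omega)
      simp only [Nat.add_zero]
      omega
    | succ k ih =>
      intro hk
      have hk' : m + 1 + k ≤ l := by omega
      have h1 := ih hk'
      have h2 := hstep (m + 1 + k) (by omega)
      have h3 := hget (m + k) (by omega)
      have hSe : S (m + 1 + k) = S (m + (k + 1)) := by
        rw [show m + 1 + k = m + (k + 1) from by omega]
      rw [show m + 1 + k + 1 = m + 1 + (k + 1) from by omega,
        show m + 1 + k = m + (k + 1) from by omega] at h2
      omega
  refine ⟨m + 1, by omega, by omega, ?_⟩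
  intro k hk
  have htl : m + 1 + k ≤ l := by omega
  have hnotP : ¬ P (m + 1 + k) :=
    Nat.findGreatest_is_greatest (by omega) htl
  have hkey := key k htl
  have hidx : m + 1 + k - 1 = m + k := by omega
  rw [hidx]
  simp only [hP, not_le] at hnotP
  simp only [hP] at hPm
  omega
end

section
/- For p > 1/2, the series Σ_{h≥0} Σ_{l=0}^{h} p^l (1−p)^h · C(h+l, l) converges. -/
lemma choose_le_two_pow' (n k : ℕ) : n.choose k ≤ 2 ^ n := by
  by_cases h : k ≤ n
  · calc n.choose k ≤ ∑ i ∈ Finset.range (n + 1), n.choose i :=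
        Finset.single_le_sum (fun i _ => Nat.zero_le _) (Finset.mem_range.2 (Nat.lt_succ_of_le h))
      _ = 2 ^ n := Nat.sum_range_choose n
  · simp [Nat.choose_eq_zero_of_lt (Nat.lt_of_not_le h)]

/-- For p > 1/2, the series Σ_{h≥0} Σ_{l=0}^h p^l (1-p)^h C(h+l, l) converges. -/
theorem summable_words_series (p : ℝ) (hp : 1 / 2 < p) (hp1 : p ≤ 1) :
    Summable (fun h : ℕ =>
      ∑ l ∈ Finset.range (h + 1), p ^ l * (1 - p) ^ h * ((h + l).choose l : ℝ)) := by
  have hp0 : (0:ℝ) ≤ p := by linarith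
  have hq0 : (0:ℝ) ≤ 1 - p := by linarith
  set r : ℝ := (2 * p) * (2 * (1 - p)) with hrdef
  have hr0 : 0 ≤ r := by positivity
  have hr1 : r < 1 := by nlinarith [sq_nonneg (2 * p - 1), sq_abs (2 * p - 1)]
  have hs : Summable (fun n : ℕ => ((n : ℝ) + 1) * r ^ n) := by
    have h1 : Summable (fun n : ℕ => (n : ℝ) ^ 1 * r ^ n) :=
      summable_pow_mul_geometric_of_norm_lt_one 1 (by rwa [Real.norm_eq_abs, abs_of_nonneg hr0])
    have h2 : Summable (fun n : ℕ => r ^ n) :=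
      summable_geometric_of_lt_one hr0 hr1
    simpa [pow_one, add_mul, one_mul] using h1.add h2
  apply Summable.of_nonneg_of_le _ _ hs
  · intro h
    apply Finset.sum_nonneg
    intro l _
    positivity
  · intro h
    calc ∑ l ∈ Finset.range (h + 1), p ^ l * (1 - p) ^ h * ((h + l).choose l : ℝ)
        ≤ ∑ l ∈ Finset.range (h + 1), r ^ h := by
          apply Finset.sum_le_sum
          intro l hl
          have hl' : l ≤ h := Nat.lt_succ_iff.mp (Finset.mem_range.mp hl)
          have hc : ((h + l).choose l : ℝ) ≤ 2 ^ (h + l) := by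
            exact_mod_cast Nat.cast_le.2 (choose_le_two_pow' (h + l) l)
          calc p ^ l * (1 - p) ^ h * ((h + l).choose l : ℝ)
              ≤ p ^ l * (1 - p) ^ h * 2 ^ (h + l) := by
                apply mul_le_mul_of_nonneg_left hc (by positivity)
            _ = (2 * p) ^ l * (2 * (1 - p)) ^ h := by
                rw [pow_add, mul_pow, mul_pow]; ring
            _ ≤ (2 * p) ^ h * (2 * (1 - p)) ^ h := by
                apply mul_le_mul_of_nonneg_right _ (by positivity)
                exact pow_le_pow_right₀ (by linarith) hl'
            _ = r ^ h := (mul_pow _ _ _).symm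
      _ = ((h : ℝ) + 1) * r ^ h := by
          rw [Finset.sum_const, Finset.card_range]; ring
end
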